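/- Let R be a ring and let F be a flat R-module. Then F is cotorsion if and only if every short exact sequence of R-modules 0 → F → G → H → 0 with G and H flat splits. -/

import Mathlib

universe u

/-- An `R`-module `C` is cotorsion if every short exact sequence `0 → C → M → F → 0`
with `F` flat splits. -/
def IsCotorsion (R : Type u) [CommRing R] (C : Type u) [AddCommGroup C] [Module R C] : Prop :=
  ∀ (M F : Type u) [AddCommGroup M] [Module R M] [AddCommGroup F] [Module R F],
    Module.Flat R F →
      ∀ (i : C →ₗ[R] M) (p : M →ₗ[R] F),
        Function.Injective i → Function.Surjective p → Function.Exact i p →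
          ∃ r : M →ₗ[R] C, r ∘ₗ i = LinearMap.id

/-- An extension of a flat module by a flat module is flat. -/
lemma flat_of_flat_extension {R F M Q : Type u} [CommRing R]
    [AddCommGroup F] [Module R F] [AddCommGroup M] [Module R M]
    [AddCommGroup Q] [Module R Q]
    (hFf : Module.Flat R F) (hQ : Module.Flat R Q)
    (i : F →ₗ[R] M) (p : M →ₗ[R] Q) (hi : Function.Injective i)
    (hp : Function.Surjective p) (hex : Function.Exact i p) :
    Module.Flat R M := by
  rw [Module.Flat.iff_rTensor_injective']
  intro I
  rw [injective_iff_map_eq_zero]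
  intro x hx
  -- the image of `x` in `I ⊗ Q` is zero
  have h1 : LinearMap.lTensor (↥I) p x = 0 := by
    have hQinj : Function.Injective (LinearMap.rTensor Q I.subtype) :=
      Module.Flat.iff_rTensor_injective'.1 hQ I
    apply hQinj
    have : LinearMap.rTensor Q I.subtype ∘ₗ LinearMap.lTensor (↥I) p
        = LinearMap.lTensor R p ∘ₗ LinearMap.rTensor M I.subtype := by
      rw [LinearMap.rTensor_comp_lTensor, LinearMap.lTensor_comp_rTensor]
    have := congrArg (fun f => f x) (congrArg DFunLike.coe this)
    simp only [LinearMap.comp_apply] at this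
    rw [this, hx, map_zero, map_zero]
  -- by exactness, `x` comes from `I ⊗ F`
  obtain ⟨y, hy⟩ := (lTensor_exact (↥I) hex hp x).1 h1
  -- `R ⊗ i` is injective
  have hRi : Function.Injective (LinearMap.lTensor R i) :=
    Module.Flat.lTensor_preserves_injective_linearMap (M := R) i hi
  have h2 : LinearMap.rTensor F I.subtype y = 0 := by
    have hFinj : Function.Injective (LinearMap.rTensor F I.subtype) :=
      Module.Flat.iff_rTensor_injective'.1 hFf I
    apply hRi
    have : LinearMap.lTensor R i ∘ₗ LinearMap.rTensor F I.subtype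
        = LinearMap.rTensor M I.subtype ∘ₗ LinearMap.lTensor (↥I) i := by
      rw [LinearMap.rTensor_comp_lTensor, LinearMap.lTensor_comp_rTensor]
    have := congrArg (fun f => f y) (congrArg DFunLike.coe this)
    simp only [LinearMap.comp_apply] at this
    rw [this, hy, hx, map_zero]
  have : y = 0 := Module.Flat.iff_rTensor_injective'.1 hFf I
    (by rw [h2, map_zero])
  rw [← hy, this, map_zero]

/-- A flat `R`-module `F` is cotorsion if and only if every short exact sequence
`0 → F → G → H → 0` with `G` and `H` flat splits. -/
theorem flat_cotorsion_iff_ses_into_flat_splits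
    (R : Type u) [CommRing R] (F : Type u) [AddCommGroup F] [Module R F]
    (hF : Module.Flat R F) :
    IsCotorsion R F ↔
      ∀ (G H : Type u) [AddCommGroup G] [Module R G] [AddCommGroup H] [Module R H],
        Module.Flat R G → Module.Flat R H →
          ∀ (i : F →ₗ[R] G) (p : G →ₗ[R] H),
            Function.Injective i → Function.Surjective p → Function.Exact i p →
              ∃ r : G →ₗ[R] F, r ∘ₗ i = LinearMap.id := by
  constructor
  · intro hcot G H _ _ _ _ _ hHflat i p hi hp hex
    exact hcot G H hHflat i p hi hp hex
  · intro h M Q _ _ _ _ hQ i p hi hp hex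
    have hM : Module.Flat R M := flat_of_flat_extension hF hQ i p hi hp hex
    exact h M Q hM hQ i p hi hp hex
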